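/- Let (Y_n)_{n≥0} be a stationary Markov chain of bounded real random variables with transition kernel K and invariant probability measure μ, let u_n = sup_{g ∈ Λ₁} ‖K^n(g) − μ(g)‖_{∞,μ}, and let f : ℝ → ℝ satisfy |f(x) − f(y)| ≤ c(|x − y|) for a concave nondecreasing c : [0,∞) → [0,∞). If u_n ≤ C ρ^n for some C > 0 and ρ ∈ (0,1), and c(t) ≤ D |log t|^{−γ} for all t ∈ (0,1) for some D > 0 and γ > 0, then ‖K^n(f) − μ(f)‖_{∞,μ} = O(n^{−γ}) as n → ∞; that is, there exists M > 0 with ‖K^n(f) − μ(f)‖_{∞,μ} ≤ M n^{−γ} for all n ≥ 1. -/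

import Mathlib

open MeasureTheory Filter
open scoped ENNReal NNReal

noncomputable def kIter (K : ProbabilityTheory.Kernel ℝ ℝ) : ℕ → (ℝ → ℝ) → ℝ → ℝ
  | 0, f => f
  | n + 1, f => fun x => ∫ y, kIter K n f y ∂(K x)

noncomputable def uSeq (K : ProbabilityTheory.Kernel ℝ ℝ) (μ : Measure ℝ) (n : ℕ) : ℝ≥0∞ :=
  ⨆ g : {g : ℝ → ℝ // LipschitzWith 1 g},
    eLpNorm (fun x => kIter K n g.1 x - ∫ y, g.1 y ∂μ) ⊤ μ

section Helpers

open ProbabilityTheory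

variable (K : Kernel ℝ ℝ) [IsMarkovKernel K]

lemma kIter_measurable {f : ℝ → ℝ} (hf : Measurable f) (n : ℕ) :
    Measurable (kIter K n f) := by
  induction n with
  | zero => exact hf
  | succ n ih =>
    have h : StronglyMeasurable fun p : ℝ × ℝ => kIter K n f p.2 :=
      ih.stronglyMeasurable.comp_measurable measurable_snd
    exact (h.integral_kernel_prod_right' (κ := K)).measurable

lemma kIter_bound {f : ℝ → ℝ} {B : ℝ} (hB : ∀ x, |f x| ≤ B) (n : ℕ) :
    ∀ x, |kIter K n f x| ≤ B := by
  induction n with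
  | zero => exact hB
  | succ n ih =>
    intro x
    show |∫ y, kIter K n f y ∂(K x)| ≤ B
    rw [← Real.norm_eq_abs]
    calc ‖∫ y, kIter K n f y ∂(K x)‖ ≤ B * ((K x) Set.univ).toReal :=
          norm_integral_le_of_norm_le_const (.of_forall fun y => by
            rw [Real.norm_eq_abs]; exact ih y)
      _ = B := by simp

lemma bdd_integrable {ν : Measure ℝ} [IsFiniteMeasure ν] {f : ℝ → ℝ} {B : ℝ}
    (hf : Measurable f) (hB : ∀ x, |f x| ≤ B) : Integrable f ν :=
  ⟨hf.aestronglyMeasurable, HasFiniteIntegral.of_bounded (C := B)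
    (.of_forall fun x => by simpa using hB x)⟩

lemma kIter_const (a : ℝ) (n : ℕ) : kIter K n (fun _ => a) = fun _ => a := by
  induction n with
  | zero => rfl
  | succ n ih =>
    funext x
    show (∫ y, kIter K n (fun _ => a) y ∂(K x)) = a
    rw [ih]
    simp

lemma kIter_const_mul (a : ℝ) (f : ℝ → ℝ) (n : ℕ) :
    kIter K n (fun x => a * f x) = fun x => a * kIter K n f x := by
  induction n with
  | zero => rfl
  | succ n ih =>
    funext x
    show (∫ y, kIter K n (fun z => a * f z) y ∂(K x)) = a * ∫ y, kIter K n f y ∂(K x)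
    rw [ih]
    exact integral_const_mul a _

lemma kIter_dist_bound {f g : ℝ → ℝ} {Bf Bg ε : ℝ} (hf : Measurable f) (hg : Measurable g)
    (hBf : ∀ x, |f x| ≤ Bf) (hBg : ∀ x, |g x| ≤ Bg) (hε : ∀ x, |f x - g x| ≤ ε) (n : ℕ) :
    ∀ x, |kIter K n f x - kIter K n g x| ≤ ε := by
  induction n with
  | zero => exact hε
  | succ n ih =>
    intro x
    have hif : Integrable (kIter K n f) (K x) :=
      bdd_integrable (kIter_measurable K hf n) (kIter_bound K hBf n)
    have hig : Integrable (kIter K n g) (K x) :=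
      bdd_integrable (kIter_measurable K hg n) (kIter_bound K hBg n)
    show |(∫ y, kIter K n f y ∂(K x)) - ∫ y, kIter K n g y ∂(K x)| ≤ ε
    rw [← integral_sub hif hig, ← Real.norm_eq_abs]
    calc ‖∫ y, (kIter K n f y - kIter K n g y) ∂(K x)‖ ≤ ε * ((K x) Set.univ).toReal :=
          norm_integral_le_of_norm_le_const (.of_forall fun y => by
            rw [Real.norm_eq_abs]; exact ih y)
      _ = ε := by simp

lemma kIter_ae_congr {μ : Measure ℝ} [IsProbabilityMeasure μ]
    (hinv : μ.bind (fun x => K x) = μ)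
    {f g : ℝ → ℝ} (hf : Measurable f) (hg : Measurable g) (hfg : f =ᵐ[μ] g) (n : ℕ) :
    kIter K n f =ᵐ[μ] kIter K n g := by
  induction n with
  | zero => exact hfg
  | succ n ih =>
    set A := {x | kIter K n f x = kIter K n g x} with hA_def
    have hA : MeasurableSet A :=
      measurableSet_eq_fun (kIter_measurable K hf n) (kIter_measurable K hg n)
    have hμA : μ Aᶜ = 0 := ih
    have hbind : ∫⁻ x, K x Aᶜ ∂μ = 0 := by
      have := Measure.bind_apply (m := μ) (f := fun x => K x) hA.compl (K.measurable.aemeasurable)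
      rw [hinv] at this
      rw [← this]
      exact hμA
    have h0 : ∀ᵐ x ∂μ, K x Aᶜ = 0 := by
      have := (lintegral_eq_zero_iff (K.measurable_coe hA.compl)).1 hbind
      filter_upwards [this] with x hx using hx
    filter_upwards [h0] with x hx
    show (∫ y, kIter K n f y ∂(K x)) = ∫ y, kIter K n g y ∂(K x)
    apply integral_congr_ae
    rw [Filter.EventuallyEq, ae_iff]
    exact measure_mono_null (fun y hy => hy) hx

lemma lipschitz_approx {f : ℝ → ℝ} {B ε L : ℝ} (hB : ∀ x, |f x| ≤ B) (hL : 0 < L)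
    (hfL : ∀ x y, |f x - f y| ≤ ε + L * |x - y|) :
    ∃ g : ℝ → ℝ, LipschitzWith (⟨L, hL.le⟩ : ℝ≥0) g ∧ ∀ x, f x - ε ≤ g x ∧ g x ≤ f x := by
  set g := fun x => ⨅ y : ℝ, (f y + L * |x - y|) with hg_def
  have hbdd : ∀ x, BddBelow (Set.range fun y => f y + L * |x - y|) := by
    intro x
    refine ⟨-B, ?_⟩
    rintro _ ⟨y, rfl⟩
    have h1 := hB y
    have h2 : 0 ≤ L * |x - y| := mul_nonneg hL.le (abs_nonneg _)
    have := neg_abs_le (f y)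
    simp only
    linarith
  have hle : ∀ x, g x ≤ f x := by
    intro x
    have := ciInf_le (hbdd x) x
    simpa using this
  have hge : ∀ x, f x - ε ≤ g x := by
    intro x
    refine le_ciInf fun y => ?_
    have := le_of_abs_le (hfL x y)
    linarith
  have key : ∀ x x', g x - g x' ≤ L * |x - x'| := by
    intro x x'
    have h1 : g x - L * |x - x'| ≤ g x' := by
      refine le_ciInf fun y => ?_
      have h2 : g x ≤ f y + L * |x - y| := ciInf_le (hbdd x) y
      have h3 : |x - y| ≤ |x - x'| + |x' - y| := abs_sub_le x x' y
      nlinarith [abs_nonneg (x - x'), abs_nonneg (x' - y)]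
    linarith
  refine ⟨g, LipschitzWith.of_dist_le_mul fun x x' => ?_, fun x => ⟨hge x, hle x⟩⟩
  rw [Real.dist_eq, Real.dist_eq]
  show |g x - g x'| ≤ L * |x - x'|
  rw [abs_sub_le_iff]
  constructor
  · exact key x x'
  · have := key x' x
    rwa [abs_sub_comm] at this

end Helpers

theorem stmt_11 (K : ProbabilityTheory.Kernel ℝ ℝ) [ProbabilityTheory.IsMarkovKernel K]
    (μ : Measure ℝ) [IsProbabilityMeasure μ]
    (hinv : μ.bind (fun x => K x) = μ)
    (M0 : ℝ) (hμM : μ {x | M0 < |x|} = 0)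
    (c : ℝ → ℝ) (hcmono : MonotoneOn c (Set.Ici 0)) (hcconc : ConcaveOn ℝ (Set.Ici 0) c)
    (hc0 : ∀ t, 0 ≤ t → 0 ≤ c t)
    (f : ℝ → ℝ) (hfmeas : Measurable f) (hf : ∀ x y, |f x - f y| ≤ c |x - y|)
    (C ρ : ℝ) (hC : 0 < C) (hρ0 : 0 < ρ) (hρ1 : ρ < 1)
    (hu : ∀ n : ℕ, 1 ≤ n → uSeq K μ n ≤ ENNReal.ofReal (C * ρ ^ n))
    (D γ : ℝ) (hD : 0 < D) (hγ : 0 < γ)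
    (hcD : ∀ t : ℝ, 0 < t → t < 1 → c t ≤ D * |Real.log t| ^ (-γ)) :
    ∃ M > (0 : ℝ), ∀ n : ℕ, 1 ≤ n →
      eLpNorm (fun x => kIter K n f x - ∫ y, f y ∂μ) ⊤ μ ≤
        ENNReal.ofReal (M * (n : ℝ) ^ (-γ)) := by
  have hlogρ : Real.log ρ < 0 := Real.log_neg hρ0 hρ1
  set M' : ℝ := max M0 0 with hM'_def
  have hM'0 : 0 ≤ M' := le_max_right _ _
  set clamp : ℝ → ℝ := fun z => max (-M') (min z M') with hclamp_def
  have hclamp_abs : ∀ z, |clamp z| ≤ M' := by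
    intro z
    rw [abs_le]
    refine ⟨le_max_left _ _, max_le (by linarith) (min_le_right _ _)⟩
  have hclamp_lip : ∀ x y, |clamp x - clamp y| ≤ |x - y| := by
    intro x y
    calc |max (-M') (min x M') - max (-M') (min y M')| ≤ |min x M' - min y M'| := by
          rw [max_comm (-M') (min x M'), max_comm (-M') (min y M')]
          exact abs_max_sub_max_le_abs _ _ _
      _ ≤ |x - y| := by
          have h := abs_min_sub_min_le_max x M' y M'
          simpa using h
  have hclamp_id : ∀ z, |z| ≤ M' → clamp z = z := by
    intro z hz
    rw [abs_le] at hz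
    simp only [hclamp_def]
    rw [min_eq_left hz.2, max_eq_right hz.1]
  set f' : ℝ → ℝ := fun x => f (clamp x) with hf'_def
  have hf'x : ∀ x, f' x = f (clamp x) := fun _ => rfl
  have hf'meas : Measurable f' :=
    hfmeas.comp (measurable_const.max (measurable_id.min measurable_const))
  have hf'lip : ∀ x y, |f' x - f' y| ≤ c |x - y| := by
    intro x y
    rw [hf'x, hf'x]
    calc |f (clamp x) - f (clamp y)| ≤ c |clamp x - clamp y| := hf _ _
      _ ≤ c |x - y| := hcmono (Set.mem_Ici.2 (abs_nonneg _)) (Set.mem_Ici.2 (abs_nonneg _))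
          (hclamp_lip x y)
  set B : ℝ := |f 0| + c M' with hB_def
  have hf'bd : ∀ x, |f' x| ≤ B := by
    intro x
    have h1 : |f (clamp x) - f 0| ≤ c |clamp x - 0| := hf _ _
    have h2 : c |clamp x - 0| ≤ c M' := hcmono (Set.mem_Ici.2 (abs_nonneg _))
      (Set.mem_Ici.2 hM'0) (by simpa using hclamp_abs x)
    have h3 : |f (clamp x)| - |f 0| ≤ |f (clamp x) - f 0| := abs_sub_abs_le_abs_sub _ _
    rw [hf'x]
    linarith
  have hff' : f =ᵐ[μ] f' := by
    rw [Filter.EventuallyEq, ae_iff]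
    refine measure_mono_null ?_ hμM
    intro x hx
    simp only [Set.mem_setOf_eq] at hx ⊢
    by_contra h
    push_neg at h
    have hxM' : |x| ≤ M' := le_trans h (le_max_left _ _)
    exact hx (by rw [hf'x, hclamp_id x hxM'])
  have hint_eq : (∫ y, f y ∂μ) = ∫ y, f' y ∂μ := integral_congr_ae hff'
  have hlin : ∀ δ t : ℝ, 0 < δ → δ ≤ t → c t ≤ c δ / δ * t := by
    intro δ t hδ ht
    rcases eq_or_lt_of_le ht with rfl | hlt
    · rw [div_mul_cancel₀ _ (ne_of_gt hδ)]
    · have h0t : 0 < t := hδ.trans hlt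
      have hb0 : (0:ℝ) ≤ δ / t := by positivity
      have hb1 : δ / t ≤ 1 := by rw [div_le_one h0t]; exact ht
      have key := hcconc.2 (Set.mem_Ici.2 (le_refl (0:ℝ))) (Set.mem_Ici.2 h0t.le)
        (show (0:ℝ) ≤ 1 - δ / t by linarith) (show (0:ℝ) ≤ δ / t from hb0)
        (show (1 - δ / t) + δ / t = 1 by ring)
      rw [smul_eq_mul, smul_eq_mul, smul_eq_mul, smul_eq_mul, mul_zero, zero_add,
        div_mul_cancel₀ _ (ne_of_gt h0t)] at key
      have hc00 : 0 ≤ c 0 := hc0 0 le_rfl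
      have h5 : δ / t * c t ≤ c δ := by nlinarith
      have h6 := mul_le_mul_of_nonneg_right h5 h0t.le
      have h7 : δ / t * c t * t = δ * c t := by field_simp
      rw [h7] at h6
      rw [div_mul_eq_mul_div, le_div_iff₀ hδ]
      linarith
  refine ⟨(2 + C) * D * (-Real.log ρ) ^ (-γ), ?_, ?_⟩
  · have h : (0:ℝ) < -Real.log ρ := by linarith
    have := Real.rpow_pos_of_pos h (-γ)
    positivity
  intro n hn
  have hδ0 : 0 < ρ ^ n := pow_pos hρ0 n
  have hδ1 : ρ ^ n < 1 := pow_lt_one₀ hρ0.le hρ1 (by omega)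
  set δ := ρ ^ n with hδ_def
  set ε := c δ with hε_def
  have hε0 : 0 ≤ ε := hc0 _ hδ0.le
  have hred : eLpNorm (fun x => kIter K n f x - ∫ y, f y ∂μ) ⊤ μ
      = eLpNorm (fun x => kIter K n f' x - ∫ y, f' y ∂μ) ⊤ μ := by
    apply eLpNorm_congr_ae
    filter_upwards [kIter_ae_congr K hinv hfmeas hf'meas hff' n] with x hx
    rw [hx, hint_eq]
  rw [hred]
  have hmain : eLpNorm (fun x => kIter K n f' x - ∫ y, f' y ∂μ) ⊤ μ
      ≤ ENNReal.ofReal ((2 + C) * ε) := by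
    rcases eq_or_lt_of_le hε0 with hε | hε
    · -- degenerate case : c vanishes, f' is constant
      have hcz : ∀ t, 0 ≤ t → c t = 0 := by
        intro t ht
        rcases le_total t δ with h | h
        · refine le_antisymm ?_ (hc0 t ht)
          have := hcmono (Set.mem_Ici.2 ht) (Set.mem_Ici.2 hδ0.le) h
          rw [← hε_def, ← hε] at this
          exact this
        · have h2 := hlin δ t hδ0 h
          refine le_antisymm ?_ (hc0 t ht)
          rw [← hε_def, ← hε] at h2
          simpa using h2
      have hconst : f' = fun _ => f' 0 := by
        funext x
        have h1 := hf'lip x 0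
        rw [hcz _ (abs_nonneg _)] at h1
        have h2 : |f' x - f' 0| = 0 := le_antisymm h1 (abs_nonneg _)
        rw [abs_eq_zero, sub_eq_zero] at h2
        exact h2
      have hkconst : kIter K n f' = fun _ => f' 0 := by
        rw [hconst, kIter_const]
      have hint' : (∫ y, f' y ∂μ) = f' 0 := by
        rw [hconst]
        simp
      have : (fun x => kIter K n f' x - ∫ y, f' y ∂μ) = fun _ : ℝ => (0:ℝ) := by
        funext x
        rw [hkconst, hint']
        simp
      rw [this, eLpNorm_zero']
      exact zero_le
    · -- main case
      set L := ε / δ with hL_def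
      have hLpos : 0 < L := div_pos hε hδ0
      have hfL : ∀ x y, |f' x - f' y| ≤ ε + L * |x - y| := by
        intro x y
        have h1 := hf'lip x y
        rcases le_total |x - y| δ with h | h
        · have h2 : c |x - y| ≤ ε := hcmono (Set.mem_Ici.2 (abs_nonneg _))
            (Set.mem_Ici.2 hδ0.le) h
          have h3 : 0 ≤ L * |x - y| := mul_nonneg hLpos.le (abs_nonneg _)
          linarith
        · have h2 := hlin δ _ hδ0 h
          rw [← hε_def] at h2
          rw [← hL_def] at h2
          linarith
      obtain ⟨g, hglip, hg⟩ := lipschitz_approx hf'bd hLpos hfL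
      have hgmeas : Measurable g := hglip.continuous.measurable
      have hgbd : ∀ x, |g x| ≤ B + ε := by
        intro x
        have h1 := hf'bd x
        have h2 := (hg x).1
        have h3 := (hg x).2
        rw [abs_le] at h1 ⊢
        constructor <;> linarith
      have hgsub : ∀ x, |f' x - g x| ≤ ε := by
        intro x
        have h2 := (hg x).1
        have h3 := (hg x).2
        rw [abs_le]
        constructor <;> linarith
      set g₁ : ℝ → ℝ := fun x => L⁻¹ * g x with hg₁_def
      have hg₁lip : LipschitzWith 1 g₁ := by
        apply LipschitzWith.of_dist_le_mul
        intro x y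
        have h1 := hglip.dist_le_mul x y
        rw [Real.dist_eq] at h1
        rw [Real.dist_eq, Real.dist_eq]
        show |L⁻¹ * g x - L⁻¹ * g y| ≤ 1 * |x - y|
        rw [← mul_sub, abs_mul, abs_inv, abs_of_pos hLpos, one_mul,
          inv_mul_le_iff₀ hLpos]
        exact h1
      have hgL : g = fun x => L * g₁ x := by
        funext x
        rw [hg₁_def]
        field_simp
      have hrw : (fun x => kIter K n g x - ∫ y, g y ∂μ)
          = L • fun x => kIter K n g₁ x - ∫ y, g₁ y ∂μ := by
        funext x
        have h1 : kIter K n g x = L * kIter K n g₁ x := by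
          conv_lhs => rw [hgL]
          rw [kIter_const_mul]
        have h2 : (∫ y, g y ∂μ) = L * ∫ y, g₁ y ∂μ := by
          conv_lhs => rw [hgL]
          exact integral_const_mul L g₁
        simp only [Pi.smul_apply, smul_eq_mul]
        rw [h1, h2]
        ring
      have e1 : eLpNorm (fun x => kIter K n f' x - kIter K n g x) ⊤ μ
          ≤ ENNReal.ofReal ε := by
        have hb := kIter_dist_bound K hf'meas hgmeas hf'bd hgbd hgsub n
        refine le_trans (eLpNorm_le_of_ae_bound (C := ε)
          (.of_forall fun x => by rw [Real.norm_eq_abs]; exact hb x)) ?_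
        simp
      have hIbd : |(∫ y, g y ∂μ) - ∫ y, f' y ∂μ| ≤ ε := by
        rw [← integral_sub (bdd_integrable hgmeas hgbd) (bdd_integrable hf'meas hf'bd),
          ← Real.norm_eq_abs]
        calc ‖∫ y, (g y - f' y) ∂μ‖ ≤ ε * (μ Set.univ).toReal :=
              norm_integral_le_of_norm_le_const (.of_forall fun y => by
                rw [Real.norm_eq_abs, abs_sub_comm]; exact hgsub y)
          _ = ε := by simp
      have e3 : eLpNorm (fun _ : ℝ => (∫ y, g y ∂μ) - ∫ y, f' y ∂μ) ⊤ μ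
          ≤ ENNReal.ofReal ε := by
        refine le_trans (eLpNorm_le_of_ae_bound (C := ε)
          (.of_forall fun _ => by rw [Real.norm_eq_abs]; exact hIbd)) ?_
        simp
      have e2 : eLpNorm (fun x => kIter K n g x - ∫ y, g y ∂μ) ⊤ μ
          ≤ ENNReal.ofReal (C * ε) := by
        rw [hrw, eLpNorm_const_smul]
        have hbound : eLpNorm (fun x => kIter K n g₁ x - ∫ y, g₁ y ∂μ) ⊤ μ
            ≤ ENNReal.ofReal (C * ρ ^ n) := by
          refine le_trans ?_ (hu n hn)
          exact le_iSup (fun g : {g : ℝ → ℝ // LipschitzWith 1 g} =>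
            eLpNorm (fun x => kIter K n g.1 x - ∫ y, g.1 y ∂μ) ⊤ μ) ⟨g₁, hg₁lip⟩
        calc (‖L‖₊ : ℝ≥0∞) • eLpNorm (fun x => kIter K n g₁ x - ∫ y, g₁ y ∂μ) ⊤ μ
            ≤ (‖L‖₊ : ℝ≥0∞) * ENNReal.ofReal (C * ρ ^ n) := by
              rw [smul_eq_mul]
              exact mul_le_mul_right hbound _
          _ = ENNReal.ofReal (C * ε) := by
              rw [show ((‖L‖₊ : ℝ≥0∞)) = ENNReal.ofReal L from Real.enorm_eq_ofReal hLpos.le, ← ENNReal.ofReal_mul hLpos.le]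
              congr 1
              rw [hL_def]
              field_simp
              ring
      have hsplit : (fun x => kIter K n f' x - ∫ y, f' y ∂μ)
          = (fun x => kIter K n f' x - kIter K n g x)
            + ((fun x => kIter K n g x - ∫ y, g y ∂μ)
              + fun _ : ℝ => (∫ y, g y ∂μ) - ∫ y, f' y ∂μ) := by
        funext x
        simp only [Pi.add_apply]
        ring
      have m1 : AEStronglyMeasurable (fun x => kIter K n f' x - kIter K n g x) μ :=
        ((kIter_measurable K hf'meas n).sub (kIter_measurable K hgmeas n)).aestronglyMeasurable
      have m2 : AEStronglyMeasurable (fun x => kIter K n g x - ∫ y, g y ∂μ) μ :=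
        ((kIter_measurable K hgmeas n).sub measurable_const).aestronglyMeasurable
      have m3 : AEStronglyMeasurable (fun _ : ℝ => (∫ y, g y ∂μ) - ∫ y, f' y ∂μ) μ :=
        aestronglyMeasurable_const
      calc eLpNorm (fun x => kIter K n f' x - ∫ y, f' y ∂μ) ⊤ μ
          ≤ eLpNorm (fun x => kIter K n f' x - kIter K n g x) ⊤ μ
            + eLpNorm ((fun x => kIter K n g x - ∫ y, g y ∂μ)
              + fun _ : ℝ => (∫ y, g y ∂μ) - ∫ y, f' y ∂μ) ⊤ μ := by
            rw [hsplit]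
            exact eLpNorm_add_le m1 (m2.add m3) le_top
        _ ≤ ENNReal.ofReal ε + (ENNReal.ofReal (C * ε) + ENNReal.ofReal ε) := by
            refine add_le_add e1 (le_trans (eLpNorm_add_le m2 m3 le_top) (add_le_add e2 e3))
        _ = ENNReal.ofReal ((2 + C) * ε) := by
            rw [← ENNReal.ofReal_add (mul_nonneg hC.le hε0) hε0,
              ← ENNReal.ofReal_add hε0 (by positivity)]
            congr 1
            ring
  refine le_trans hmain ?_
  apply ENNReal.ofReal_le_ofReal
  have hn0 : (0:ℝ) < n := by exact_mod_cast hn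
  have hlog : |Real.log δ| = (n : ℝ) * (-Real.log ρ) := by
    rw [hδ_def, Real.log_pow, abs_mul, Nat.abs_cast, abs_of_neg hlogρ]
  have hcb : ε ≤ D * ((n : ℝ) * (-Real.log ρ)) ^ (-γ) := by
    have h := hcD δ hδ0 hδ1
    rw [hlog] at h
    exact h
  have hmul : ((n : ℝ) * (-Real.log ρ)) ^ (-γ) = (n : ℝ) ^ (-γ) * (-Real.log ρ) ^ (-γ) :=
    Real.mul_rpow (Nat.cast_nonneg n) (by linarith)
  have h2C : (0:ℝ) ≤ 2 + C := by linarith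
  calc (2 + C) * ε ≤ (2 + C) * (D * ((n:ℝ) * (-Real.log ρ)) ^ (-γ)) :=
        mul_le_mul_of_nonneg_left hcb h2C
    _ = (2 + C) * D * (-Real.log ρ) ^ (-γ) * (n : ℝ) ^ (-γ) := by
        rw [hmul]
        ring
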